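/- Let Ω ⊂ ℝ^N be open and bounded, q ∈ L^∞(Ω; ℝ^N), and s ∈ (0,1). Let u ∈ C²(Ω) ∩ C(ℝ^N) ∩ L¹_s(ℝ^N) satisfy -Δu + (-Δ)^s u + q·∇u ≥ 0 in Ω and u ≥ 0 on ℝ^N \ Ω. Then either u > 0 in Ω or u ≡ 0 on ℝ^N. -/

import Mathlib

noncomputable section
open MeasureTheory

/-- The normalizing constant `C_{N,s}` of the fractional Laplacian. -/
def fracC (N : ℕ) (s : ℝ) : ℝ :=
  Real.pi ^ (-(N : ℝ) / 2) * 2 ^ (2 * s) * s *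
    Real.Gamma ((N : ℝ) / 2 + s) / Real.Gamma (1 - s)

/-- The fractional Laplacian `(-Δ)^s` in second-difference form (equal to the
principal-value form `C_{N,s} P.V. ∫ (u(x)-u(y))|x-y|^{-N-2s} dy`). -/
def fracLap (N : ℕ) (s : ℝ) (u : EuclideanSpace ℝ (Fin N) → ℝ)
    (x : EuclideanSpace ℝ (Fin N)) : ℝ :=
  (fracC N s / 2) *
    ∫ y : EuclideanSpace ℝ (Fin N),
      (2 * u x - u (x + y) - u (x - y)) / ‖y‖ ^ ((N : ℝ) + 2 * s)

/-- The Laplacian `Δu(x) = ∑ᵢ ∂²u/∂xᵢ²(x)`. -/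
def lap (N : ℕ) (u : EuclideanSpace ℝ (Fin N) → ℝ)
    (x : EuclideanSpace ℝ (Fin N)) : ℝ :=
  ∑ i : Fin N,
    fderiv ℝ (fun z => fderiv ℝ u z (EuclideanSpace.single i (1:ℝ))) x
      (EuclideanSpace.single i (1:ℝ))

section auxlemmas
open Metric Set

lemma measurable_norm_rpow {E : Type*} [NormedAddCommGroup E]
    [MeasurableSpace E] [OpensMeasurableSpace E] (a : ℝ) :
    Measurable (fun y : E => ‖y‖ ^ a) := by fun_prop

lemma aux_integrableOn_rpow_ball {E : Type*} [NormedAddCommGroup E] [NormedSpace ℝ E]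
    [FiniteDimensional ℝ E] [MeasurableSpace E] [BorelSpace E]
    (vol : Measure E) [vol.IsAddHaarMeasure]
    {a : ℝ} (ha : -(Module.finrank ℝ E : ℝ) < a) (ha0 : a < 0) {r : ℝ} (hr : 0 < r) :
    IntegrableOn (fun y : E => ‖y‖ ^ a) (Metric.ball (0:E) r) vol := by
  set d : ℝ := (Module.finrank ℝ E : ℝ) with hd
  have hd0 : 0 ≤ d := Nat.cast_nonneg _
  set μ := vol.restrict (Metric.ball (0:E) r) with hμ
  constructor
  · exact (measurable_norm_rpow a).aestronglyMeasurable
  · rw [hasFiniteIntegral_iff_norm]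
    have hnn : ∀ y : E, 0 ≤ ‖y‖ ^ a := fun y => Real.rpow_nonneg (norm_nonneg y) a
    have hcong : ∀ y : E, ENNReal.ofReal ‖‖y‖ ^ a‖ = ENNReal.ofReal (‖y‖ ^ a) := by
      intro y; rw [Real.norm_of_nonneg (hnn y)]
    simp_rw [hcong]
    have : (∫⁻ y in Metric.ball (0:E) r, ENNReal.ofReal (‖y‖ ^ a) ∂vol)
        = ∫⁻ t in Ioi (0:ℝ), μ {y : E | t ≤ ‖y‖ ^ a} := by
      rw [← lintegral_eq_lintegral_meas_le μ (Filter.Eventually.of_forall hnn)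
        ((measurable_norm_rpow a).aemeasurable)]
    rw [this]
    have hsub : ∀ t : ℝ, 0 < t →
        {y : E | t ≤ ‖y‖ ^ a} ⊆ Metric.closedBall (0:E) (t ^ a⁻¹) := by
      intro t ht y hy
      simp only [mem_setOf_eq] at hy
      have hy0 : y ≠ 0 := by
        rintro rfl
        rw [norm_zero, Real.zero_rpow (ne_of_lt ha0)] at hy
        linarith
      have hny : 0 < ‖y‖ := norm_pos_iff.mpr hy0
      rw [mem_closedBall_zero_iff]
      exact (Real.le_rpow_inv_iff_of_neg hny ht ha0).mpr hy
    have hmeas_bound : ∀ t : ℝ, 0 < t →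
        μ {y : E | t ≤ ‖y‖ ^ a} ≤ ENNReal.ofReal (t ^ (a⁻¹ * d)) * vol (Metric.ball (0:E) 1) := by
      intro t ht
      calc μ {y : E | t ≤ ‖y‖ ^ a} ≤ vol (Metric.closedBall (0:E) (t ^ a⁻¹)) :=
            le_trans (Measure.restrict_le_self _) (measure_mono (hsub t ht))
        _ = ENNReal.ofReal ((t ^ a⁻¹) ^ Module.finrank ℝ E) * vol (Metric.ball (0:E) 1) := by
            rw [Measure.addHaar_closedBall _ _ (Real.rpow_nonneg ht.le _)]
        _ = ENNReal.ofReal (t ^ (a⁻¹ * d)) * vol (Metric.ball (0:E) 1) := by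
            rw [← Real.rpow_natCast (t ^ a⁻¹), ← Real.rpow_mul ht.le]
    calc (∫⁻ t in Ioi (0:ℝ), μ {y : E | t ≤ ‖y‖ ^ a})
        ≤ (∫⁻ t in Ioc (0:ℝ) 1, μ {y : E | t ≤ ‖y‖ ^ a})
          + ∫⁻ t in Ioi (1:ℝ), μ {y : E | t ≤ ‖y‖ ^ a} :=
          le_trans (lintegral_mono_set Ioi_subset_Ioc_union_Ioi) (lintegral_union_le _ _ _)
      _ < ⊤ := by
          refine ENNReal.add_lt_top.2 ⟨?_, ?_⟩
          · calc (∫⁻ t in Ioc (0:ℝ) 1, μ {y : E | t ≤ ‖y‖ ^ a})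
                ≤ ∫⁻ _ in Ioc (0:ℝ) 1, vol (Metric.ball (0:E) r) := by
                  refine lintegral_mono fun t => ?_
                  calc μ {y : E | t ≤ ‖y‖ ^ a} ≤ μ univ := measure_mono (subset_univ _)
                    _ = vol (Metric.ball (0:E) r) := by
                        rw [hμ, Measure.restrict_apply_univ]
              _ < ⊤ := by
                  rw [setLIntegral_const]
                  exact ENNReal.mul_lt_top measure_ball_lt_top (by simp [Real.volume_Ioc])
          · have hexp : a⁻¹ * d < -1 := by
              rw [mul_comm, ← div_eq_mul_inv, div_lt_iff_of_neg ha0]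
              linarith
            calc (∫⁻ t in Ioi (1:ℝ), μ {y : E | t ≤ ‖y‖ ^ a})
                ≤ ∫⁻ t in Ioi (1:ℝ),
                    ENNReal.ofReal (t ^ (a⁻¹ * d)) * vol (Metric.ball (0:E) 1) := by
                  refine setLIntegral_mono' measurableSet_Ioi fun t ht => ?_
                  exact hmeas_bound t (lt_trans one_pos ht)
              _ = (∫⁻ t in Ioi (1:ℝ), ENNReal.ofReal (t ^ (a⁻¹ * d)))
                    * vol (Metric.ball (0:E) 1) := by
                  rw [lintegral_mul_const' _ _ measure_ball_lt_top.ne]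
              _ < ⊤ := ENNReal.mul_lt_top
                  (integrableOn_Ioi_rpow_of_lt hexp one_pos).setLIntegral_lt_top
                  measure_ball_lt_top

end auxlemmas

set_option maxHeartbeats 1000000 in
/-- Strong maximum principle for `L = -Δ + (-Δ)^s + q·∇`: if `Ω ⊂ ℝ^N` is open and
bounded, `q ∈ L^∞(Ω)`, `s ∈ (0,1)`, and `u ∈ C²(Ω) ∩ C(ℝ^N) ∩ L¹_s(ℝ^N)` satisfies
`Lu ≥ 0` in `Ω` and `u ≥ 0` on `ℝ^N \ Ω`, then `u > 0` in `Ω` or `u ≡ 0` on `ℝ^N`. -/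
theorem strong_maximum_principle {N : ℕ} (hN : 0 < N)
    (Ω : Set (EuclideanSpace ℝ (Fin N))) (hΩo : IsOpen Ω)
    (hΩb : Bornology.IsBounded Ω)
    (q : EuclideanSpace ℝ (Fin N) → EuclideanSpace ℝ (Fin N))
    (hq : ∃ M : ℝ, ∀ x ∈ Ω, ‖q x‖ ≤ M)
    (s : ℝ) (hs : s ∈ Set.Ioo (0:ℝ) 1)
    (u : EuclideanSpace ℝ (Fin N) → ℝ)
    (hu2 : ContDiffOn ℝ 2 u Ω) (huc : Continuous u)
    (huL1s : Integrable (fun y : EuclideanSpace ℝ (Fin N) =>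
      |u y| / (1 + ‖y‖ ^ ((N : ℝ) + 2 * s))))
    (hL : ∀ x ∈ Ω,
      0 ≤ -(lap N u x) + fracLap N s u x + inner (𝕜 := ℝ) (q x) (gradient u x))
    (hout : ∀ x ∉ Ω, 0 ≤ u x) :
    (∀ x ∈ Ω, 0 < u x) ∨ (∀ x, u x = 0) := by
  classical
  by_cases hpos : ∀ x ∈ Ω, 0 < u x
  · exact Or.inl hpos
  right
  push_neg at hpos
  obtain ⟨x₁, hx₁Ω, hx₁⟩ := hpos
  have hKc : IsCompact (closure Ω) :=
    Metric.isCompact_of_isClosed_isBounded isClosed_closure hΩb.closure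
  obtain ⟨x₂, hx₂cl, hmin⟩ := hKc.exists_isMinOn ⟨x₁, subset_closure hx₁Ω⟩ huc.continuousOn
  obtain ⟨x₀, hx₀Ω, hglob, hx₀le⟩ :
      ∃ x₀ ∈ Ω, (∀ z, u x₀ ≤ u z) ∧ u x₀ ≤ 0 := by
    have hx₂le : u x₂ ≤ u x₁ := hmin (subset_closure hx₁Ω)
    have hglob₂ : ∀ z, u x₂ ≤ u z := by
      intro z
      by_cases hz : z ∈ closure Ω
      · exact hmin hz
      · exact le_trans (hx₂le.trans hx₁) (hout z (fun hzΩ => hz (subset_closure hzΩ)))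
    by_cases hx₂Ω : x₂ ∈ Ω
    · exact ⟨x₂, hx₂Ω, hglob₂, hx₂le.trans hx₁⟩
    · have h0 : u x₂ = 0 := le_antisymm (hx₂le.trans hx₁) (hout x₂ hx₂Ω)
      have h1 : u x₁ = 0 := le_antisymm hx₁ (by rw [← h0]; exact hglob₂ x₁)
      refine ⟨x₁, hx₁Ω, fun z => ?_, le_of_eq h1⟩
      rw [h1, ← h0]; exact hglob₂ z
  -- notation
  set p : ℝ := (N : ℝ) + 2 * s with hp
  have hN1 : (1:ℝ) ≤ (N:ℝ) := by exact_mod_cast hN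
  have hppos : 0 < p := by rw [hp]; nlinarith [hs.1]
  set F : EuclideanSpace ℝ (Fin N) → ℝ :=
    fun y => 2 * u x₀ - u (x₀ + y) - u (x₀ - y) with hFdef
  have hFc : Continuous F := by
    apply Continuous.sub
    apply Continuous.sub continuous_const
    · exact huc.comp (continuous_const.add continuous_id)
    · exact huc.comp (continuous_const.sub continuous_id)
  set g : EuclideanSpace ℝ (Fin N) → ℝ := fun y => F y / ‖y‖ ^ p with hgdef
  have hgm : Measurable g := by
    apply Measurable.div hFc.measurable
    fun_prop
  have hgnonpos : ∀ y, g y ≤ 0 := by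
    intro y
    apply div_nonpos_of_nonpos_of_nonneg
    · have := hglob (x₀ + y); have := hglob (x₀ - y); simp only [hFdef]; linarith
    · positivity
  -- fderiv zero at min
  have hfd0 : fderiv ℝ u x₀ = 0 := by
    have : IsLocalMin u x₀ := Filter.Eventually.of_forall hglob
    exact this.fderiv_eq_zero
  have hgrad0 : gradient u x₀ = 0 := by
    unfold gradient
    rw [hfd0]; simp
  have hlap : 0 ≤ lap N u x₀ := by
    rw [lap]
    apply Finset.sum_nonneg
    intro i _
    set e : EuclideanSpace ℝ (Fin N) := EuclideanSpace.single i (1:ℝ) with he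
    by_contra hneg
    push_neg at hneg
    have hcd : ContDiffAt ℝ 2 u x₀ := hu2.contDiffAt (hΩo.mem_nhds hx₀Ω)
    have h1 : ContDiffAt ℝ 1 (fderiv ℝ u) x₀ := hcd.fderiv_right (by norm_num)
    have hdf : DifferentiableAt ℝ (fderiv ℝ u) x₀ := h1.differentiableAt (by norm_num)
    set B : EuclideanSpace ℝ (Fin N) →L[ℝ] ℝ :=
      (ContinuousLinearMap.apply ℝ ℝ e).comp (fderiv ℝ (fderiv ℝ u) x₀) with hB
    have hφ : HasFDerivAt (fun z => fderiv ℝ u z e) B x₀ :=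
      (ContinuousLinearMap.apply ℝ ℝ e).hasFDerivAt.comp x₀ hdf.hasFDerivAt
    have haeq : fderiv ℝ (fun z => fderiv ℝ u z e) x₀ = B := hφ.fderiv
    have ha0 : B e < 0 := by rw [← haeq]; exact hneg
    set ψ : ℝ → ℝ := fun t => fderiv ℝ u (x₀ + t • e) e with hψ
    have hLd : ∀ t : ℝ, HasDerivAt (fun t : ℝ => x₀ + t • e) e t := by
      intro t
      simpa using ((hasDerivAt_id t).smul_const e).const_add x₀
    have hψd : HasDerivAt ψ (B e) 0 := by
      have hφ0 : HasFDerivAt (fun z => fderiv ℝ u z e) B ((fun t : ℝ => x₀ + t • e) 0) := by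
        simpa using hφ
      exact hφ0.comp_hasDerivAt 0 (hLd 0)
    have hψ0 : ψ 0 = 0 := by
      simp only [hψ, zero_smul, add_zero, hfd0]
      simp
    -- slope eventually negative on the right
    have hslope : ∀ᶠ t in nhdsWithin (0:ℝ) (Set.Ioi 0), slope ψ 0 t < 0 := by
      have htend : Filter.Tendsto (slope ψ 0) (nhdsWithin 0 {(0:ℝ)}ᶜ) (nhds (B e)) :=
        hasDerivAt_iff_tendsto_slope.mp hψd
      have hev : ∀ᶠ t in nhdsWithin (0:ℝ) {(0:ℝ)}ᶜ, slope ψ 0 t < 0 :=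
        htend.eventually_lt_const ha0
      exact hev.filter_mono (nhdsWithin_mono 0 (fun t ht => ne_of_gt ht))
    have hmem : ∀ᶠ t in nhds (0:ℝ), x₀ + t • e ∈ Ω := by
      have hcont : Continuous (fun t : ℝ => x₀ + t • e) :=
        continuous_const.add (continuous_id.smul continuous_const)
      have h0 : (fun t : ℝ => x₀ + t • e) 0 = x₀ := by simp
      have htd := hcont.tendsto 0
      simp only [zero_smul, add_zero] at htd
      exact htd.eventually_mem (hΩo.mem_nhds hx₀Ω)
    obtain ⟨δ₁, hδ₁, hδ₁mem⟩ := Metric.eventually_nhds_iff.mp hmem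
    obtain ⟨δ₂, hδ₂, hδ₂sub⟩ :=
      mem_nhdsGT_iff_exists_Ioo_subset.mp hslope
    set δ : ℝ := min (δ₁ / 2) (δ₂ / 2) with hδdef
    have hδpos : 0 < δ := by
      apply lt_min <;> [linarith; {have := Set.mem_Ioi.mp hδ₂; linarith}]
    have hδΩ : ∀ t ∈ Set.Icc (0:ℝ) δ, x₀ + t • e ∈ Ω := by
      intro t ht
      apply hδ₁mem
      rw [Real.dist_eq, sub_zero, abs_of_nonneg ht.1]
      have := ht.2
      have h2 : δ ≤ δ₁ / 2 := min_le_left _ _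
      linarith
    have hψneg : ∀ t ∈ Set.Ioo (0:ℝ) δ, ψ t < 0 := by
      intro t ht
      have hsl : slope ψ 0 t < 0 := by
        apply hδ₂sub
        constructor
        · exact ht.1
        · have h2 : δ ≤ δ₂ / 2 := min_le_right _ _
          have := Set.mem_Ioi.mp hδ₂
          have := ht.2
          linarith
      rw [slope_def_field, hψ0, sub_zero, sub_zero] at hsl
      by_contra hcon
      push_neg at hcon
      have := div_nonneg hcon ht.1.le
      linarith
    -- MVT
    set g1 : ℝ → ℝ := fun t => u (x₀ + t • e) with hg1
    have hg1c : ContinuousOn g1 (Set.Icc 0 δ) :=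
      (huc.comp (continuous_const.add (continuous_id.smul continuous_const))).continuousOn
    have hg1d : ∀ t ∈ Set.Ioo (0:ℝ) δ, HasDerivAt g1 (ψ t) t := by
      intro t ht
      have hmem' : x₀ + t • e ∈ Ω := hδΩ t ⟨ht.1.le, ht.2.le⟩
      have hdiff : DifferentiableAt ℝ u (x₀ + t • e) :=
        (hu2.contDiffAt (hΩo.mem_nhds hmem')).differentiableAt (by norm_num)
      exact hdiff.hasFDerivAt.comp_hasDerivAt t (hLd t)
    obtain ⟨c, hc, hceq⟩ := exists_hasDerivAt_eq_slope g1 ψ hδpos hg1c hg1d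
    have hψc : ψ c < 0 := hψneg c hc
    have hg10 : g1 0 = u x₀ := by simp [hg1]
    have hg1δ : u x₀ ≤ g1 δ := hglob _
    rw [hceq, hg10] at hψc
    have : 0 ≤ (g1 δ - u x₀) / (δ - 0) := by
      apply div_nonneg (by linarith) (by linarith)
    linarith
  have hgint : Integrable g := by
    obtain ⟨ε, hε, hball⟩ := Metric.isOpen_iff.mp hΩo x₀ hx₀Ω
    set r : ℝ := ε / 2 with hrdef
    have hr : 0 < r := by positivity
    have hcb : Metric.closedBall x₀ r ⊆ Ω :=
      (Metric.closedBall_subset_ball (by rw [hrdef]; linarith)).trans hball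
    -- bound on the second derivative on the closed ball
    obtain ⟨C, hC0, hCb⟩ : ∃ C : ℝ, 0 ≤ C ∧
        ∀ z ∈ Metric.closedBall x₀ r, ‖fderiv ℝ (fderiv ℝ u) z‖ ≤ C := by
      have h1 : ContDiffOn ℝ 1 (fderiv ℝ u) Ω := hu2.fderiv_of_isOpen hΩo (by norm_num)
      have hcont : ContinuousOn (fderiv ℝ (fderiv ℝ u)) Ω :=
        h1.continuousOn_fderiv_of_isOpen hΩo (le_refl _)
      obtain ⟨C, hCb⟩ :=
        (isCompact_closedBall x₀ r).exists_bound_of_continuousOn (f := fderiv ℝ (fderiv ℝ u)) (hcont.mono hcb)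
      exact ⟨C, le_trans (norm_nonneg _) (hCb x₀ (Metric.mem_closedBall_self hr.le)), hCb⟩
    have hudiff : ∀ z ∈ Ω, DifferentiableAt ℝ u z := fun z hz =>
      (hu2.contDiffAt (hΩo.mem_nhds hz)).differentiableAt (by norm_num)
    -- Lipschitz bound for fderiv u on the closed ball
    have hlip : ∀ z ∈ Metric.closedBall x₀ r,
        ‖fderiv ℝ u z - fderiv ℝ u x₀‖ ≤ C * ‖z - x₀‖ := by
      intro z hz
      have := (convex_closedBall x₀ r).norm_image_sub_le_of_norm_hasFDerivWithin_le
        (f := fderiv ℝ u) (f' := fun w => fderiv ℝ (fderiv ℝ u) w)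
        (fun w hw =>
          (((hu2.contDiffAt (hΩo.mem_nhds (hcb hw))).fderiv_right (m := 1)
            (by norm_num)).differentiableAt (by norm_num)).hasFDerivAt.hasFDerivWithinAt)
        (fun w hw => hCb w hw) (Metric.mem_closedBall_self hr.le) hz
      simpa using this
    -- second-order Taylor bound
    have hT : ∀ y : EuclideanSpace ℝ (Fin N), ‖y‖ ≤ r →
        |u (x₀ + y) - u x₀ - fderiv ℝ u x₀ y| ≤ C * ‖y‖ ^ 2 := by
      intro y hy
      have hsub2 : Metric.closedBall x₀ ‖y‖ ⊆ Metric.closedBall x₀ r :=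
        Metric.closedBall_subset_closedBall hy
      have hmemy : x₀ + y ∈ Metric.closedBall x₀ ‖y‖ := by
        rw [Metric.mem_closedBall, dist_eq_norm]
        simp
      have key := (convex_closedBall x₀ ‖y‖).norm_image_sub_le_of_norm_hasFDerivWithin_le
        (f := fun z => u z - fderiv ℝ u x₀ z) (f' := fun z => fderiv ℝ u z - fderiv ℝ u x₀)
        (fun w hw =>
          ((hudiff w (hcb (hsub2 hw))).hasFDerivAt.sub
            (fderiv ℝ u x₀).hasFDerivAt).hasFDerivWithinAt)
        (fun w hw => by
          calc ‖fderiv ℝ u w - fderiv ℝ u x₀‖ ≤ C * ‖w - x₀‖ := hlip w (hsub2 hw)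
            _ ≤ C * ‖y‖ := by
                have := Metric.mem_closedBall.mp hw
                rw [dist_eq_norm] at this
                exact mul_le_mul_of_nonneg_left this hC0)
        (Metric.mem_closedBall_self (norm_nonneg y)) hmemy
      have hre : u (x₀ + y) - fderiv ℝ u x₀ (x₀ + y) - (u x₀ - fderiv ℝ u x₀ x₀)
          = u (x₀ + y) - u x₀ - fderiv ℝ u x₀ y := by
        rw [map_add]; ring
      rw [hre] at key
      calc |u (x₀ + y) - u x₀ - fderiv ℝ u x₀ y|
          ≤ C * ‖y‖ * ‖x₀ + y - x₀‖ := by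
            simpa [Real.norm_eq_abs] using key
        _ = C * ‖y‖ ^ 2 := by
            rw [add_sub_cancel_left]; ring
    -- numerator bound near zero
    have hnum : ∀ y : EuclideanSpace ℝ (Fin N), ‖y‖ ≤ r → |F y| ≤ 2 * C * ‖y‖ ^ 2 := by
      intro y hy
      have h1 := hT y hy
      have h2 := hT (-y) (by rwa [norm_neg])
      rw [← sub_eq_add_neg, norm_neg] at h2
      have hFy : F y = -((u (x₀ + y) - u x₀ - fderiv ℝ u x₀ y)
          + (u (x₀ - y) - u x₀ - fderiv ℝ u x₀ (-y))) := by
        simp only [hFdef, map_neg]; ring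
      rw [hFy, abs_neg]
      calc |(u (x₀ + y) - u x₀ - fderiv ℝ u x₀ y)
            + (u (x₀ - y) - u x₀ - fderiv ℝ u x₀ (-y))|
          ≤ |u (x₀ + y) - u x₀ - fderiv ℝ u x₀ y|
            + |u (x₀ - y) - u x₀ - fderiv ℝ u x₀ (-y)| := abs_add_le _ _
        _ ≤ C * ‖y‖ ^ 2 + C * ‖y‖ ^ 2 := add_le_add h1 h2
        _ = 2 * C * ‖y‖ ^ 2 := by ring
    have habsg : ∀ y : EuclideanSpace ℝ (Fin N), |g y| = |F y| / ‖y‖ ^ p := by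
      intro y
      rw [hgdef]
      rw [abs_div, abs_of_nonneg (Real.rpow_nonneg (norm_nonneg y) p)]
    have hg0 : g 0 = 0 := by
      have : F 0 = 0 := by
        show 2 * u x₀ - u (x₀ + 0) - u (x₀ - 0) = 0
        rw [add_zero, sub_zero]; ring
      rw [hgdef]
      simp only [this, zero_div]
    -- integrability on the ball
    have hball_int : IntegrableOn g (Metric.ball 0 r) := by
      rcases lt_or_ge (2 - p) 0 with hcase | hcase
      · have hfin : -((Module.finrank ℝ (EuclideanSpace ℝ (Fin N)) : ℝ)) < 2 - p := by
          rw [finrank_euclideanSpace_fin, hp]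
          have := hs.2
          nlinarith
        have hmaj : IntegrableOn (fun y : EuclideanSpace ℝ (Fin N) => 2 * C * ‖y‖ ^ (2 - p))
            (Metric.ball 0 r) :=
          ((aux_integrableOn_rpow_ball volume hfin hcase hr)).const_mul _
        refine Integrable.mono' hmaj (hgm.aestronglyMeasurable.restrict) ?_
        rw [ae_restrict_iff' measurableSet_ball]
        refine Filter.Eventually.of_forall (fun y hy => ?_)
        rw [Metric.mem_ball, dist_zero_right] at hy
        rcases eq_or_ne y 0 with rfl | hy0
        · rw [Real.norm_eq_abs, hg0, abs_zero]
          positivity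
        · have hny : 0 < ‖y‖ := norm_pos_iff.mpr hy0
          rw [Real.norm_eq_abs, habsg]
          have hstep : |F y| / ‖y‖ ^ p ≤ (2 * C * ‖y‖ ^ 2) / ‖y‖ ^ p := by
            gcongr
            exact hnum y hy.le
          refine hstep.trans (le_of_eq ?_)
          rw [Real.rpow_sub hny, ← Real.rpow_natCast ‖y‖ 2]
          norm_num
          ring
      · -- bounded case
        have hbd : ∀ y ∈ Metric.ball (0:EuclideanSpace ℝ (Fin N)) r,
            ‖g y‖ ≤ 2 * C * r ^ (2 - p) := by
          intro y hy
          rw [Metric.mem_ball, dist_zero_right] at hy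
          rcases eq_or_ne y 0 with rfl | hy0
          · rw [Real.norm_eq_abs, hg0, abs_zero]
            positivity
          · have hny : 0 < ‖y‖ := norm_pos_iff.mpr hy0
            rw [Real.norm_eq_abs, habsg]
            calc |F y| / ‖y‖ ^ p ≤ (2 * C * ‖y‖ ^ 2) / ‖y‖ ^ p := by
                  gcongr; exact hnum y hy.le
              _ = 2 * C * ‖y‖ ^ (2 - p) := by
                  rw [Real.rpow_sub hny, ← Real.rpow_natCast ‖y‖ 2]
                  norm_num
                  ring
              _ ≤ 2 * C * r ^ (2 - p) := by
                  have := Real.rpow_le_rpow (norm_nonneg y) hy.le hcase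
                  nlinarith [this, hC0]
        refine Integrable.mono' (g := fun _ => 2 * C * r ^ (2 - p))
          (integrableOn_const measure_ball_lt_top.ne)
          (hgm.aestronglyMeasurable.restrict) ?_
        rw [ae_restrict_iff' measurableSet_ball]
        exact Filter.Eventually.of_forall hbd
    -- integrability outside the ball
    set w : EuclideanSpace ℝ (Fin N) → ℝ := fun z => |u z| / (1 + ‖z‖ ^ p) with hwdef
    have hw_nonneg : ∀ z, 0 ≤ w z := fun z => by
      rw [hwdef]
      have : 0 < 1 + ‖z‖ ^ p := by positivity
      positivity
    have hint1 : Integrable (fun y => w (x₀ + y)) := huL1s.comp_add_left x₀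
    have hint2 : Integrable (fun y => w (x₀ - y)) := by
      have := (huL1s.comp_add_left x₀).comp_neg
      simpa [sub_eq_add_neg] using this
    set K₁ : ℝ := ((1 + r) / r) ^ p with hK₁
    set K₂ : ℝ := (1 / r) ^ p + (‖x₀‖ / r + 1) ^ p with hK₂
    have hK₁0 : 0 < K₁ := by rw [hK₁]; positivity
    have hfinlt : (Module.finrank ℝ (EuclideanSpace ℝ (Fin N)) : ℝ) < p := by
      rw [finrank_euclideanSpace_fin, hp]
      nlinarith [hs.1]
    have hGint : Integrable (fun y : EuclideanSpace ℝ (Fin N) =>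
        2 * |u x₀| * K₁ * (1 + ‖y‖) ^ (-p) + K₂ * w (x₀ + y) + K₂ * w (x₀ - y)) := by
      exact (((integrable_one_add_norm hfinlt).const_mul _).add
        (hint1.const_mul _)).add (hint2.const_mul _)
    have hcompl_int : IntegrableOn g (Metric.ball 0 r)ᶜ := by
      refine Integrable.mono' hGint.integrableOn (hgm.aestronglyMeasurable.restrict) ?_
      rw [ae_restrict_iff' measurableSet_ball.compl]
      refine Filter.Eventually.of_forall (fun y hy => ?_)
      have hyr : r ≤ ‖y‖ := by
        by_contra hcon
        push_neg at hcon
        exact hy (by rw [Metric.mem_ball, dist_zero_right]; exact hcon)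
      have hny : 0 < ‖y‖ := lt_of_lt_of_le hr hyr
      have hnyp : 0 < ‖y‖ ^ p := Real.rpow_pos_of_pos hny p
      -- inverse power bounds
      have hbound1 : (‖y‖ ^ p)⁻¹ ≤ K₁ * ((1 + ‖y‖) ^ p)⁻¹ := by
        have hXpos : 0 < (1 + ‖y‖) ^ p := Real.rpow_pos_of_pos (by positivity) p
        rw [inv_eq_one_div, ← div_eq_mul_inv, div_le_div_iff₀ hnyp hXpos, one_mul]
        calc (1 + ‖y‖) ^ p ≤ ((1 + r) / r * ‖y‖) ^ p := by
              apply Real.rpow_le_rpow (by positivity) _ hppos.le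
              rw [div_mul_eq_mul_div, le_div_iff₀ hr]
              nlinarith
          _ = K₁ * ‖y‖ ^ p := Real.mul_rpow (by positivity) (norm_nonneg y)
      have hbound2 : ∀ z : EuclideanSpace ℝ (Fin N), ‖z‖ ≤ ‖x₀‖ + ‖y‖ →
          (‖y‖ ^ p)⁻¹ ≤ K₂ * (1 + ‖z‖ ^ p)⁻¹ := by
        intro z hz
        have hZpos : 0 < 1 + ‖z‖ ^ p := by positivity
        rw [inv_eq_one_div, ← div_eq_mul_inv, div_le_div_iff₀ hnyp hZpos, one_mul]
        have h1 : (1:ℝ) ≤ (1 / r) ^ p * ‖y‖ ^ p := by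
          rw [← Real.mul_rpow (by positivity) (norm_nonneg y)]
          apply Real.one_le_rpow _ hppos.le
          rw [one_div, inv_mul_eq_div, le_div_iff₀ hr, one_mul]
          exact hyr
        have h2 : ‖z‖ ^ p ≤ (‖x₀‖ / r + 1) ^ p * ‖y‖ ^ p := by
          rw [← Real.mul_rpow (by positivity) (norm_nonneg y)]
          apply Real.rpow_le_rpow (norm_nonneg z) _ hppos.le
          rw [add_mul, div_mul_eq_mul_div, one_mul]
          have : ‖x₀‖ ≤ ‖x₀‖ * ‖y‖ / r := by
            rw [le_div_iff₀ hr]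
            nlinarith [norm_nonneg x₀]
          linarith
        rw [hK₂, add_mul]
        linarith
      -- combine
      have hFbound : |F y| ≤ 2 * |u x₀| + |u (x₀ + y)| + |u (x₀ - y)| := by
        simp only [hFdef]
        calc |2 * u x₀ - u (x₀ + y) - u (x₀ - y)|
            ≤ |2 * u x₀ - u (x₀ + y)| + |u (x₀ - y)| := abs_sub _ _
          _ ≤ |2 * u x₀| + |u (x₀ + y)| + |u (x₀ - y)| := by
              have := abs_sub (2 * u x₀) (u (x₀ + y))
              linarith
          _ = 2 * |u x₀| + |u (x₀ + y)| + |u (x₀ - y)| := by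
              rw [abs_mul]
              norm_num
      rw [Real.norm_eq_abs, habsg, div_eq_mul_inv]
      have step1 : |F y| * (‖y‖ ^ p)⁻¹
          ≤ (2 * |u x₀| + |u (x₀ + y)| + |u (x₀ - y)|) * (‖y‖ ^ p)⁻¹ := by
        apply mul_le_mul_of_nonneg_right hFbound (by positivity)
      refine step1.trans ?_
      rw [add_mul, add_mul]
      have t1 : 2 * |u x₀| * (‖y‖ ^ p)⁻¹ ≤ 2 * |u x₀| * K₁ * (1 + ‖y‖) ^ (-p) := by
        rw [Real.rpow_neg (by positivity)]
        have h := mul_le_mul_of_nonneg_left hbound1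
          (show (0:ℝ) ≤ 2 * |u x₀| by positivity)
        calc 2 * |u x₀| * (‖y‖ ^ p)⁻¹ ≤ 2 * |u x₀| * (K₁ * ((1 + ‖y‖) ^ p)⁻¹) := h
          _ = 2 * |u x₀| * K₁ * ((1 + ‖y‖) ^ p)⁻¹ := by ring
      have t2 : |u (x₀ + y)| * (‖y‖ ^ p)⁻¹ ≤ K₂ * w (x₀ + y) := by
        have hb := hbound2 (x₀ + y) (norm_add_le x₀ y)
        calc |u (x₀ + y)| * (‖y‖ ^ p)⁻¹ ≤ |u (x₀ + y)| * (K₂ * (1 + ‖x₀ + y‖ ^ p)⁻¹) :=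
              mul_le_mul_of_nonneg_left hb (abs_nonneg _)
          _ = K₂ * w (x₀ + y) := by
              simp only [hwdef, div_eq_mul_inv]
              ring
      have t3 : |u (x₀ - y)| * (‖y‖ ^ p)⁻¹ ≤ K₂ * w (x₀ - y) := by
        have hnormsub : ‖x₀ - y‖ ≤ ‖x₀‖ + ‖y‖ := norm_sub_le x₀ y
        have hb := hbound2 (x₀ - y) hnormsub
        calc |u (x₀ - y)| * (‖y‖ ^ p)⁻¹ ≤ |u (x₀ - y)| * (K₂ * (1 + ‖x₀ - y‖ ^ p)⁻¹) :=
              mul_le_mul_of_nonneg_left hb (abs_nonneg _)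
          _ = K₂ * w (x₀ - y) := by
              simp only [hwdef, div_eq_mul_inv]
              ring
      linarith
    have : IntegrableOn g (Metric.ball 0 r ∪ (Metric.ball 0 r)ᶜ) :=
      hball_int.union hcompl_int
    rw [Set.union_compl_self] at this
    exact integrableOn_univ.mp this
  -- integral of g is zero
  have hint_nonpos : ∫ y, g y ≤ 0 := integral_nonpos hgnonpos
  have hfracC : 0 < fracC N s := by
    have h1 : (0:ℝ) < Real.pi ^ (-(N : ℝ) / 2) := Real.rpow_pos_of_pos Real.pi_pos _
    have h2 : (0:ℝ) < (2:ℝ) ^ (2 * s) := Real.rpow_pos_of_pos (by norm_num) _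
    have h3 : (0:ℝ) < Real.Gamma ((N : ℝ) / 2 + s) :=
      Real.Gamma_pos_of_pos (by nlinarith [hs.1])
    have h4 : (0:ℝ) < Real.Gamma (1 - s) :=
      Real.Gamma_pos_of_pos (by nlinarith [hs.2])
    have h5 := hs.1
    rw [fracC]
    positivity
  have hint_nonneg : 0 ≤ ∫ y, g y := by
    have hL0 := hL x₀ hx₀Ω
    rw [hgrad0, inner_zero_right] at hL0
    have hfrac : 0 ≤ fracLap N s u x₀ := by linarith
    rw [fracLap] at hfrac
    by_contra hneg
    push_neg at hneg
    have : fracC N s / 2 * ∫ y, g y < 0 :=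
      mul_neg_of_pos_of_neg (by linarith) hneg
    simp only [hgdef, hFdef, hp] at this
    linarith
  have hint0 : ∫ y, g y = 0 := le_antisymm hint_nonpos hint_nonneg
  have hgae : g =ᶠ[ae volume] 0 := by
    have hnn : 0 ≤ fun y => -g y := fun y => by simpa using hgnonpos y
    have hint : Integrable (fun y => -g y) := hgint.neg
    have : ∫ y, -g y = 0 := by rw [integral_neg, hint0, neg_zero]
    have := (integral_eq_zero_iff_of_nonneg hnn hint).mp this
    filter_upwards [this] with y hy
    simpa using congrArg Neg.neg hy
  -- F vanishes
  haveI : Nontrivial (EuclideanSpace ℝ (Fin N)) := by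
    refine ⟨EuclideanSpace.single ⟨0, hN⟩ (1:ℝ), 0, ?_⟩
    intro h
    have := congrArg (fun v => v ⟨0, hN⟩) h
    simp at this
  have hFeq : ∀ y, F y = 0 := by
    have hae : F =ᶠ[ae volume] 0 := by
      have h0 : (volume : Measure (EuclideanSpace ℝ (Fin N))) {0} = 0 := measure_singleton 0
      filter_upwards [hgae, compl_mem_ae_iff.mpr h0] with y hy hy0
      have hyne : y ≠ 0 := hy0
      have hnorm : ‖y‖ ^ p ≠ 0 := by
        have : 0 < ‖y‖ := norm_pos_iff.mpr hyne
        positivity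
      have : F y / ‖y‖ ^ p = 0 := hy
      field_simp at this
      simpa using this
    have := (Continuous.ae_eq_iff_eq volume hFc continuous_const).mp hae
    intro y; exact congrFun this y
  -- u constant
  have hconst : ∀ z, u z = u x₀ := by
    intro z
    have h1 := hFeq (z - x₀)
    simp only [hFdef] at h1
    rw [add_sub_cancel] at h1
    have h2 := hglob z
    have h3 := hglob (x₀ - (z - x₀))
    linarith
  -- conclude u ≡ 0
  obtain ⟨R, hR⟩ := hΩb.subset_closedBall 0
  set z : EuclideanSpace ℝ (Fin N) := EuclideanSpace.single ⟨0, hN⟩ (|R| + 1) with hz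
  have hznorm : ‖z‖ = |R| + 1 := by
    rw [hz, EuclideanSpace.norm_single, Real.norm_eq_abs,
      abs_of_nonneg (by linarith [abs_nonneg R])]
  have hzout : z ∉ Ω := by
    intro hzin
    have := hR hzin
    rw [Metric.mem_closedBall, dist_zero_right, hznorm] at this
    have : R ≤ |R| := le_abs_self R
    linarith [le_abs_self R, Metric.mem_closedBall.mp (hR hzin)]
  have h0 : u x₀ = 0 := by
    have h1 : 0 ≤ u z := hout z hzout
    have h2 : u z = u x₀ := hconst z
    linarith
  intro x
  rw [hconst x, h0]
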